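/- Let s > 0 and ν, κ ∈ ℝ with κ ≠ 0 and κ² = ν² − s², and set β := i·s. Then | i·κ·(κ − β)·2^{2β}·Γ(β + iν)·Γ(−2β)·e^{iπβ} / (ν·Γ(2β)·Γ(1 − β + iν)) |² = e^{−2πs}·sinh(π(ν − s))/sinh(π(ν + s)). -/

import Mathlib

open Complex Real

lemma gammaI (t : ℝ) (ht : t ≠ 0) :
    Complex.Gamma (I * t) * Complex.Gamma (-(I * t)) =
      ((π / (t * Real.sinh (π * t)) : ℝ) : ℂ) := by
  have hne : -(I * (t:ℂ)) ≠ 0 := by simp [Complex.ext_iff, ht]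
  have h1 : Complex.Gamma (1 - I * t) = (-(I * (t:ℂ))) * Complex.Gamma (-(I * t)) := by
    have := Complex.Gamma_add_one (-(I * (t:ℂ))) hne
    rw [show -(I * (t:ℂ)) + 1 = 1 - I * t by ring] at this
    exact this
  have h2 := Complex.Gamma_mul_Gamma_one_sub (I * (t:ℂ))
  rw [h1, show (π:ℂ) * (I * t) = ((π:ℂ) * t) * I by ring, Complex.sin_mul_I,
    ← Complex.ofReal_mul, ← Complex.ofReal_sinh] at h2
  have hshne : Real.sinh (π * t) ≠ 0 := by
    simp [Real.sinh_eq_zero, Real.pi_ne_zero, ht]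
  have htc : (t:ℂ) ≠ 0 := Complex.ofReal_ne_zero.mpr ht
  have hsc : ((Real.sinh (π * t) : ℝ) : ℂ) ≠ 0 := Complex.ofReal_ne_zero.mpr hshne
  have hI := Complex.I_ne_zero
  rw [eq_div_iff (mul_ne_zero hsc hI)] at h2
  rw [Complex.ofReal_div, Complex.ofReal_mul]
  rw [eq_div_iff (mul_ne_zero htc hsc)]
  linear_combination h2 + Complex.Gamma (I * ↑t) * Complex.Gamma (-(I * ↑t)) * ↑t * ↑(Real.sinh (π*t)) * Complex.I_sq

lemma gammaOneI (t : ℝ) (ht : t ≠ 0) :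
    Complex.Gamma (1 + I * t) * Complex.Gamma (1 - I * t) =
      ((π * t / Real.sinh (π * t) : ℝ) : ℂ) := by
  have hne : (I * (t:ℂ)) ≠ 0 := by simp [Complex.ext_iff, ht]
  have h1 : Complex.Gamma (1 + I * t) = (I * (t:ℂ)) * Complex.Gamma (I * t) := by
    have := Complex.Gamma_add_one (I * (t:ℂ)) hne
    rw [show (I * (t:ℂ)) + 1 = 1 + I * t by ring] at this
    exact this
  have h2 := Complex.Gamma_mul_Gamma_one_sub (I * (t:ℂ))
  rw [show (π:ℂ) * (I * t) = ((π:ℂ) * t) * I by ring, Complex.sin_mul_I,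
    ← Complex.ofReal_mul, ← Complex.ofReal_sinh] at h2
  have hshne : Real.sinh (π * t) ≠ 0 := by
    simp [Real.sinh_eq_zero, Real.pi_ne_zero, ht]
  have hsc : ((Real.sinh (π * t) : ℝ) : ℂ) ≠ 0 := Complex.ofReal_ne_zero.mpr hshne
  have hI := Complex.I_ne_zero
  rw [eq_div_iff (mul_ne_zero hsc hI)] at h2
  rw [h1, Complex.ofReal_div, Complex.ofReal_mul]
  rw [eq_div_iff hsc]
  linear_combination (↑t : ℂ) * h2

lemma absGammaI_sq (t : ℝ) (ht : t ≠ 0) :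
    ‖Complex.Gamma (I * t)‖ ^ 2 = π / (t * Real.sinh (π * t)) := by
  have hc : (starRingEnd ℂ) (Complex.Gamma (I * t)) = Complex.Gamma (-(I * t)) := by
    rw [← Complex.Gamma_conj]
    congr 1
    rw [map_mul, Complex.conj_I, Complex.conj_ofReal]
    ring
  have h2 : ((Complex.normSq (Complex.Gamma (I * t)) : ℝ) : ℂ)
      = ((π / (t * Real.sinh (π * t)) : ℝ) : ℂ) := by
    rw [← Complex.mul_conj, hc, gammaI t ht]
  rw [Complex.sq_norm, Complex.ofReal_inj.mp h2]

lemma absGammaOneI_sq (t : ℝ) (ht : t ≠ 0) :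
    ‖Complex.Gamma (1 + I * t)‖ ^ 2 = π * t / Real.sinh (π * t) := by
  have hc : (starRingEnd ℂ) (Complex.Gamma (1 + I * t)) = Complex.Gamma (1 - I * t) := by
    rw [← Complex.Gamma_conj]
    congr 1
    rw [map_add, map_one, map_mul, Complex.conj_I, Complex.conj_ofReal]
    ring
  have h2 : ((Complex.normSq (Complex.Gamma (1 + I * t)) : ℝ) : ℂ)
      = ((π * t / Real.sinh (π * t) : ℝ) : ℂ) := by
    rw [← Complex.mul_conj, hc, gammaOneI t ht]
  rw [Complex.sq_norm, Complex.ofReal_inj.mp h2]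

theorem cMinus_abs_sq (s ν κ : ℝ) (hs : 0 < s) (hκ : κ ≠ 0) (h : κ ^ 2 = ν ^ 2 - s ^ 2) :
    ‖(I * (κ : ℂ) * ((κ : ℂ) - I * (s : ℂ)) *
            Complex.exp (2 * (I * (s : ℂ)) * (Real.log 2 : ℂ)) *
            Complex.Gamma (I * (s : ℂ) + I * (ν : ℂ)) *
            Complex.Gamma (-(2 * (I * (s : ℂ)))) *
            Complex.exp (I * (π : ℂ) * (I * (s : ℂ))) /
          ((ν : ℂ) * Complex.Gamma (2 * (I * (s : ℂ))) *
            Complex.Gamma (1 - I * (s : ℂ) + I * (ν : ℂ))))‖ ^ 2 =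
      Real.exp (-2 * π * s) * Real.sinh (π * (ν - s)) / Real.sinh (π * (ν + s)) := by
  have hκ2 : 0 < κ ^ 2 := by positivity
  have hν : ν ≠ 0 := by
    intro h0
    rw [h0] at h
    nlinarith
  have hplus : s + ν ≠ 0 := by
    intro h0
    have hν' : ν = -s := by linarith
    rw [hν'] at h
    nlinarith
  have hminus : ν - s ≠ 0 := by
    intro h0
    have hν' : ν = s := by linarith
    rw [hν'] at h
    nlinarith
  have hSp : Real.sinh (π * (s + ν)) ≠ 0 := by
    simp [Real.sinh_eq_zero, Real.pi_ne_zero, hplus]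
  have hSm : Real.sinh (π * (ν - s)) ≠ 0 := by
    simp [Real.sinh_eq_zero, Real.pi_ne_zero, hminus]
  rw [show I * (s:ℂ) + I * (ν:ℂ) = I * ((s + ν : ℝ):ℂ) by push_cast; ring,
      show -(2 * (I * (s:ℂ))) = -(I * ((2 * s : ℝ):ℂ)) by push_cast; ring,
      show (1:ℂ) - I * (s:ℂ) + I * (ν:ℂ) = 1 + I * ((ν - s : ℝ):ℂ) by push_cast; ring,
      show Complex.Gamma (2 * (I * (s:ℂ))) = Complex.Gamma (I * ((2 * s : ℝ):ℂ)) by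
        congr 1; push_cast; ring]
  have hg2 : Complex.Gamma (-(I * ((2 * s : ℝ):ℂ)))
      = (starRingEnd ℂ) (Complex.Gamma (I * ((2 * s : ℝ):ℂ))) := by
    rw [← Complex.Gamma_conj]
    congr 1
    rw [map_mul, Complex.conj_I, Complex.conj_ofReal]
    ring
  rw [hg2]
  have hbne : ‖Complex.Gamma (I * ((2 * s : ℝ):ℂ))‖ ≠ 0 := by
    rw [ne_eq, norm_eq_zero]
    apply Complex.Gamma_ne_zero
    intro m hm
    have := congrArg Complex.im hm
    simp at this
    linarith
  simp only [norm_div, norm_mul, Complex.norm_I, Complex.norm_real, Real.norm_eq_abs,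
    Complex.norm_conj, Complex.norm_exp, one_mul]
  simp only [Complex.mul_re, Complex.mul_im, Complex.I_re, Complex.I_im, Complex.ofReal_re,
    Complex.ofReal_im, Complex.re_ofNat, Complex.im_ofNat, mul_zero, zero_mul, mul_one, one_mul,
    sub_zero, zero_sub, add_zero, zero_add, neg_zero, Real.exp_zero, mul_zero]
  simp only [div_pow, mul_pow, _root_.sq_abs, Complex.sq_norm]
  rw [show Complex.normSq (Complex.Gamma (I * ((s + ν : ℝ):ℂ)))
        = π / ((s + ν) * Real.sinh (π * (s + ν))) by
      rw [← Complex.sq_norm, absGammaI_sq (s + ν) hplus],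
    show Complex.normSq (Complex.Gamma (1 + I * ((ν - s : ℝ):ℂ)))
        = π * (ν - s) / Real.sinh (π * (ν - s)) by
      rw [← Complex.sq_norm, absGammaOneI_sq (ν - s) hminus],
    show Complex.normSq ((κ:ℂ) - I * (s:ℂ)) = ν ^ 2 by
      simp [Complex.normSq_apply]; nlinarith]
  have hE : Real.exp (-(π * s)) ^ 2 = Real.exp (-2 * π * s) := by
    rw [sq, ← Real.exp_add]; ring_nf
  rw [hE, show Real.sinh (π * (ν + s)) = Real.sinh (π * (s + ν)) by ring_nf]
  have hBne : Complex.normSq (Complex.Gamma (I * ((2 * s : ℝ):ℂ))) ≠ 0 := by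
    rw [← Complex.sq_norm]; exact pow_ne_zero 2 hbne
  have hπ := Real.pi_ne_zero
  have hκν : κ ^ 2 = (s + ν) * (ν - s) := by nlinarith
  rw [hκν]
  push_cast at hBne ⊢
  field_simp
  ring_nf
  exact mul_inv_cancel₀ (by convert hBne using 3 <;> ring)
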